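/- Let P_H satisfy a(P_H u, v_H) = ⟨u, v_H⟩ for all v_H ∈ V_H, I_H the a-orthogonal projection onto V_H, and Q defined by ⟨∇Qu,∇v⟩ = ⟨u,(I-I_H)v⟩. Then for all u ∈ V_h, a((P_H + Q)u, u) = ‖u‖₀² - κ²⟨Qu, u⟩ + i⟨σQu, u⟩, where a(u,v) = ⟨∇u,∇v⟩ - κ²⟨u,v⟩ + i⟨σu,v⟩. -/

import Mathlib

open scoped ComplexInnerProductSpace

/-- Two-level preconditioner identity: with `P_H` the coarse solution operator,
`I_H` the `a`-orthogonal projection onto the coarse space `V_H`, and `Q` the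
residual-correction operator, one has
`a((P_H + Q)u, u) = ‖u‖₀² - κ²⟪Qu, u⟫ + i⟪σQu, u⟫`, where
`a(u,v) = ⟪∇u,∇v⟫ - κ²⟪u,v⟫ + i⟪σu,v⟫` and `σ` is modelled by the operator `T`. -/
theorem stmt_16 {V W : Type*} [NormedAddCommGroup V] [InnerProductSpace ℂ V]
    [NormedAddCommGroup W] [InnerProductSpace ℂ W]
    (G : V →ₗ[ℂ] W) (T P_H I_H Q : V →ₗ[ℂ] V) (V_H : Submodule ℂ V) (κ : ℝ)
    (a : V → V → ℂ)
    (ha : ∀ u v, a u v = ⟪G v, G u⟫ - (κ:ℂ)^2 * ⟪v, u⟫ + Complex.I * ⟪v, T u⟫)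
    (hPHrange : ∀ u : V, P_H u ∈ V_H)
    (hPH : ∀ u : V, ∀ v ∈ V_H, a (P_H u) v = ⟪v, u⟫)
    (hIHrange : ∀ u : V, I_H u ∈ V_H)
    (hIH : ∀ u : V, ∀ v ∈ V_H, a v (I_H u) = a v u)
    (hQ : ∀ u v : V, ⟪G v, G (Q u)⟫ = ⟪v - I_H v, u⟫) :
    ∀ u : V, a (P_H u + Q u) u =
      (‖u‖^2 : ℂ) - (κ:ℂ)^2 * ⟪u, Q u⟫ + Complex.I * ⟪u, T (Q u)⟫ := by
  intro u
  have h1 : a (P_H u) u = ⟪I_H u, u⟫ := by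
    rw [← hIH u (P_H u) (hPHrange u), hPH u (I_H u) (hIHrange u)]
  have hsplit : a (P_H u + Q u) u = a (P_H u) u + a (Q u) u := by
    simp only [ha, map_add, inner_add_right]; ring
  rw [hsplit, h1, ha, hQ u u, inner_sub_left]
  have hn : (inner ℂ u u : ℂ) = ((‖u‖:ℂ))^2 := by
    exact_mod_cast inner_self_eq_norm_sq_to_K (𝕜 := ℂ) u
  rw [hn]; ring
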